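/- Let μ be a locally finite positive Borel measure, F a collection of dyadic intervals contained in a fixed interval I₀ satisfying the Carleson condition ∑_{F' ∈ F, F' ⊆ F} μ(F') ≤ C_F μ(F) for all F ∈ F. Then for all 1 < p < ∞, ∫_{I₀} (∑_{F ∈ F, F ⊆ I₀} 1_F(y))^{p/2} dμ(y) ≤ C μ(I₀), with C depending only on p and C_F. -/

import Mathlib

open MeasureTheory Set
open scoped ENNReal NNReal

/-- The dyadic interval `[k·2ⁿ, (k+1)·2ⁿ)`. -/
def dyadicInterval (n k : ℤ) : Set ℝ :=
  Set.Ico ((k : ℝ) * 2 ^ n) (((k : ℝ) + 1) * 2 ^ n)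


lemma dyadic_lt (n k : ℤ) : (k : ℝ) * 2 ^ n < ((k : ℝ) + 1) * 2 ^ n := by
  have h : (0:ℝ) < 2 ^ n := by positivity
  nlinarith

lemma dyadic_nonempty (n k : ℤ) : (dyadicInterval n k).Nonempty :=
  ⟨(k:ℝ) * 2 ^ n, le_refl _, dyadic_lt n k⟩

lemma dyadic_measurable (n k : ℤ) : MeasurableSet (dyadicInterval n k) :=
  measurableSet_Ico

lemma dyadic_subset_of_le {n k n' k' : ℤ} (hnn : n ≤ n')
    {x : ℝ} (hx : x ∈ dyadicInterval n k) (hx' : x ∈ dyadicInterval n' k') :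
    dyadicInterval n k ⊆ dyadicInterval n' k' := by
  obtain ⟨h1, h2⟩ := hx
  obtain ⟨h1', h2'⟩ := hx'
  set d : ℕ := (n' - n).toNat with hd
  have hdn : n' = n + (d : ℤ) := by omega
  have hpow : (2:ℝ) ^ n' = 2 ^ n * 2 ^ d := by
    rw [hdn, zpow_add₀ (by norm_num : (2:ℝ) ≠ 0)]
    norm_num [zpow_natCast]
  have h2n : (0:ℝ) < 2 ^ n := by positivity
  have hk1 : (k:ℝ) < ((k':ℝ) + 1) * 2 ^ d := by
    have : (k:ℝ) * 2 ^ n < ((k':ℝ) + 1) * 2 ^ d * 2 ^ n := by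
      calc (k:ℝ) * 2 ^ n ≤ x := h1
        _ < ((k':ℝ) + 1) * 2 ^ n' := h2'
        _ = ((k':ℝ) + 1) * 2 ^ d * 2 ^ n := by rw [hpow]; ring
    exact lt_of_mul_lt_mul_right this h2n.le
  have hk2 : ((k':ℝ)) * 2 ^ d < (k:ℝ) + 1 := by
    have : (k':ℝ) * 2 ^ d * 2 ^ n < ((k:ℝ) + 1) * 2 ^ n := by
      calc (k':ℝ) * 2 ^ d * 2 ^ n = (k':ℝ) * 2 ^ n' := by rw [hpow]; ring
        _ ≤ x := h1'
        _ < ((k:ℝ) + 1) * 2 ^ n := h2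
    exact lt_of_mul_lt_mul_right this h2n.le
  have hk1' : k + 1 ≤ (k' + 1) * 2 ^ d := by
    have : ((k:ℤ):ℝ) < (((k' + 1) * 2 ^ d : ℤ) : ℝ) := by push_cast; linarith
    have := Int.cast_lt.mp this
    omega
  have hk2' : k' * 2 ^ d ≤ k := by
    have : ((k' * 2 ^ d : ℤ) : ℝ) < ((k + 1 : ℤ):ℝ) := by push_cast; linarith
    have := Int.cast_lt.mp this
    omega
  intro y hy
  obtain ⟨hy1, hy2⟩ := hy
  constructor
  · calc (k':ℝ) * 2 ^ n' = (k':ℝ) * 2 ^ d * 2 ^ n := by rw [hpow]; ring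
      _ ≤ (k:ℝ) * 2 ^ n := by
          have h' : ((k' * 2 ^ d : ℤ):ℝ) ≤ ((k:ℤ):ℝ) := Int.cast_le.mpr hk2'
          push_cast at h'
          nlinarith
      _ ≤ y := hy1
  · calc y < ((k:ℝ) + 1) * 2 ^ n := hy2
      _ ≤ ((k':ℝ) + 1) * 2 ^ n' := by
          have h' : ((k + 1 : ℤ):ℝ) ≤ (((k' + 1) * 2 ^ d : ℤ):ℝ) := Int.cast_le.mpr hk1'
          push_cast at h'
          rw [hpow]
          nlinarith

lemma dyadic_nested_of_mem {n k n' k' : ℤ} {x : ℝ}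
    (hx : x ∈ dyadicInterval n k) (hx' : x ∈ dyadicInterval n' k') :
    dyadicInterval n k ⊆ dyadicInterval n' k' ∨ dyadicInterval n' k' ⊆ dyadicInterval n k := by
  rcases le_total n n' with h | h
  · exact Or.inl (dyadic_subset_of_le h hx hx')
  · exact Or.inr (dyadic_subset_of_le h hx' hx)

lemma dyadic_endpoints_of_subset {n k n' k' : ℤ}
    (h : dyadicInterval n k ⊆ dyadicInterval n' k') :
    (k':ℝ) * 2 ^ n' ≤ (k:ℝ) * 2 ^ n ∧ ((k:ℝ)+1) * 2 ^ n ≤ ((k':ℝ)+1) * 2 ^ n' := by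
  have := (Set.Ico_subset_Ico_iff (dyadic_lt n k)).mp h
  exact this

lemma dyadic_scale_le_of_subset {n k n' k' : ℤ}
    (h : dyadicInterval n k ⊆ dyadicInterval n' k') : n ≤ n' := by
  obtain ⟨h1, h2⟩ := dyadic_endpoints_of_subset h
  have hlen : (2:ℝ) ^ n ≤ 2 ^ n' := by nlinarith
  exact_mod_cast (zpow_le_zpow_iff_right₀ (by norm_num : (1:ℝ) < 2)).mp hlen

lemma dyadic_inj {n k n' k' : ℤ}
    (h : dyadicInterval n k = dyadicInterval n' k') : n = n' ∧ k = k' := by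
  obtain ⟨h1, h2⟩ := dyadic_endpoints_of_subset h.subset
  obtain ⟨h1', h2'⟩ := dyadic_endpoints_of_subset h.symm.subset
  have hn : n = n' :=
    le_antisymm (dyadic_scale_le_of_subset h.subset) (dyadic_scale_le_of_subset h.symm.subset)
  subst hn
  have h2n : (0:ℝ) < 2 ^ n := by positivity
  have hk : (k:ℝ) = (k':ℝ) := by
    have heq : (k:ℝ) * 2 ^ n = (k':ℝ) * 2 ^ n := le_antisymm h1' h1
    exact mul_right_cancel₀ h2n.ne' heq
  exact ⟨rfl, by exact_mod_cast hk⟩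


abbrev dyI (q : ℤ × ℤ) : Set ℝ := dyadicInterval q.1 q.2

open Classical in
/-- weight of an (m+1)-tuple: μ of the last interval if the tuple is a decreasing chain. -/
noncomputable def chainWt (μ : Measure ℝ) (m : ℕ) (s : Fin (m+1) → ℤ × ℤ) : ℝ≥0∞ :=
  if (∀ i j : Fin (m+1), i ≤ j → dyI (s j) ⊆ dyI (s i))
  then μ (dyI (s (Fin.last m))) else 0

lemma sum_snoc {M : Type*} [AddCommMonoid M] (G : Finset (ℤ × ℤ)) (m : ℕ)
    (f : (Fin (m+1) → ℤ × ℤ) → M) :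
    ∑ g ∈ Fintype.piFinset (fun _ : Fin (m+1) => G), f g
      = ∑ t ∈ Fintype.piFinset (fun _ : Fin m => G), ∑ a ∈ G, f (Fin.snoc t a) := by
  rw [← Finset.sum_product']
  apply Finset.sum_nbij' (i := fun g => (Fin.init g, g (Fin.last m)))
    (j := fun p => Fin.snoc p.1 p.2)
  · intro g hg
    simp only [Fintype.mem_piFinset] at hg
    simp only [Finset.mem_product, Fintype.mem_piFinset]
    exact ⟨fun i => hg _, hg _⟩
  · intro p hp
    simp only [Finset.mem_product, Fintype.mem_piFinset] at hp
    simp only [Fintype.mem_piFinset]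
    intro i
    induction i using Fin.lastCases with
    | last => simp [hp.2]
    | cast j => simp [hp.1 j]
  · intro g _; exact Fin.snoc_init_self g
  · intro p _; simp
  · intro g _
    rw [Fin.snoc_init_self]

lemma chain_snoc_iff (m : ℕ) (t : Fin (m+1) → ℤ × ℤ) (a : ℤ × ℤ) :
    (∀ i j : Fin (m+2), i ≤ j → dyI ((Fin.snoc t a : Fin (m+2) → ℤ × ℤ) j) ⊆ dyI ((Fin.snoc t a : Fin (m+2) → ℤ × ℤ) i))
      ↔ (∀ i j : Fin (m+1), i ≤ j → dyI (t j) ⊆ dyI (t i))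
          ∧ dyI a ⊆ dyI (t (Fin.last m)) := by
  constructor
  · intro h
    constructor
    · intro i j hij
      have := h i.castSucc j.castSucc (by simpa using hij)
      simpa using this
    · have := h (Fin.last m).castSucc (Fin.last (m+1)) (by simp [Fin.le_def])
      simpa using this
  · rintro ⟨hch, hsub⟩ i j hij
    induction j using Fin.lastCases with
    | last =>
      induction i using Fin.lastCases with
      | last => simp
      | cast i' =>
        simp only [Fin.snoc_last, Fin.snoc_castSucc]
        exact hsub.trans (hch i' (Fin.last m) (Fin.le_last i'))
    | cast j' =>
      induction i using Fin.lastCases with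
      | last =>
        exfalso
        simp only [Fin.le_def, Fin.coe_castSucc, Fin.val_last] at hij
        have := j'.is_lt
        omega
      | cast i' =>
        simp only [Fin.snoc_castSucc]
        exact hch i' j' (by simpa using hij)

open Classical in
lemma chainWt_snoc (μ : Measure ℝ) (m : ℕ) (t : Fin (m+1) → ℤ × ℤ) (a : ℤ × ℤ) :
    chainWt μ (m+1) (Fin.snoc t a)
      = if (∀ i j : Fin (m+1), i ≤ j → dyI (t j) ⊆ dyI (t i))
            ∧ dyI a ⊆ dyI (t (Fin.last m))
        then μ (dyI a) else 0 := by
  unfold chainWt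
  refine if_congr (chain_snoc_iff m t a) ?_ rfl
  rw [Fin.snoc_last]

open Classical in
lemma chainSum_le (μ : Measure ℝ) (CF : ℝ≥0) (F : Set (ℤ × ℤ))
    (hcar : ∀ q₀ ∈ F,
      ∑' q : {q : ℤ × ℤ // q ∈ F ∧ dyadicInterval q.1 q.2 ⊆ dyadicInterval q₀.1 q₀.2},
        μ (dyadicInterval q.1.1 q.1.2) ≤ (CF : ℝ≥0∞) * μ (dyadicInterval q₀.1 q₀.2))
    (G : Finset (ℤ × ℤ)) (hGF : ∀ q ∈ G, q ∈ F) :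
    ∀ m : ℕ, ∑ g ∈ Fintype.piFinset (fun _ : Fin (m+1) => G), chainWt μ m g
      ≤ (CF : ℝ≥0∞) ^ m * ∑ q ∈ G, μ (dyI q) := by
  intro m
  induction m with
  | zero =>
    rw [pow_zero, one_mul]
    apply le_of_eq
    apply Finset.sum_nbij' (i := fun g => g 0) (j := fun a => fun _ => a)
    · intro g hg
      simp only [Fintype.mem_piFinset] at hg
      exact hg 0
    · intro a ha
      simp only [Fintype.mem_piFinset]
      exact fun _ => ha
    · intro g _
      funext i
      have : i = 0 := Fin.ext (by have h1 := i.is_lt; omega)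
      rw [this]
    · intro a _; rfl
    · intro g _
      unfold chainWt
      rw [if_pos]
      · rfl
      · intro i j hij
        have : i = j := Fin.ext (by have h1 := i.is_lt; have h2 := j.is_lt; omega)
        rw [this]
  | succ m ih =>
    rw [sum_snoc]
    have key : ∀ t ∈ Fintype.piFinset (fun _ : Fin (m+1) => G),
        ∑ a ∈ G, chainWt μ (m+1) (Fin.snoc t a) ≤ (CF : ℝ≥0∞) * chainWt μ m t := by
      intro t ht
      simp only [Fintype.mem_piFinset] at ht
      by_cases hch : ∀ i j : Fin (m+1), i ≤ j → dyI (t j) ⊆ dyI (t i)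
      · set q₀ := t (Fin.last m) with hq₀
        have hq₀F : q₀ ∈ F := hGF _ (ht _)
        have hwt : chainWt μ m t = μ (dyI q₀) := by
          unfold chainWt; rw [if_pos hch]
        rw [hwt]
        calc ∑ a ∈ G, chainWt μ (m+1) (Fin.snoc t a)
            = ∑ a ∈ G.filter (fun a => dyI a ⊆ dyI q₀), μ (dyI a) := by
              rw [Finset.sum_filter]
              apply Finset.sum_congr rfl
              intro a _
              rw [chainWt_snoc]
              by_cases hs : dyI a ⊆ dyI q₀
              · rw [if_pos ⟨hch, hs⟩, if_pos hs]
              · rw [if_neg (by tauto), if_neg hs]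
          _ ≤ (CF : ℝ≥0∞) * μ (dyI q₀) := by
              refine le_trans ?_ (hcar q₀ hq₀F)
              have := ENNReal.sum_le_tsum (f := fun q : ℤ × ℤ =>
                Set.indicator {q : ℤ × ℤ | q ∈ F ∧ dyadicInterval q.1 q.2 ⊆ dyadicInterval q₀.1 q₀.2}
                  (fun q => μ (dyadicInterval q.1 q.2)) q)
                (G.filter (fun a => dyI a ⊆ dyI q₀))
              rw [← tsum_subtype] at this
              refine le_trans (le_of_eq ?_) this
              apply Finset.sum_congr rfl
              intro a ha
              simp only [Finset.mem_filter] at ha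
              rw [Set.indicator_of_mem]
              exact ⟨hGF _ ha.1, ha.2⟩
      · have h0 : ∀ a ∈ G, chainWt μ (m+1) (Fin.snoc t a) = 0 := by
          intro a _
          rw [chainWt_snoc, if_neg (by tauto)]
        rw [Finset.sum_congr rfl h0, Finset.sum_const, smul_zero]
        exact zero_le
    calc ∑ t ∈ Fintype.piFinset (fun _ : Fin (m+1) => G),
          ∑ a ∈ G, chainWt μ (m+1) (Fin.snoc t a)
        ≤ ∑ t ∈ Fintype.piFinset (fun _ : Fin (m+1) => G), (CF : ℝ≥0∞) * chainWt μ m t :=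
          Finset.sum_le_sum key
      _ = (CF : ℝ≥0∞) * ∑ t ∈ Fintype.piFinset (fun _ : Fin (m+1) => G), chainWt μ m t := by
          rw [Finset.mul_sum]
      _ ≤ (CF : ℝ≥0∞) * ((CF : ℝ≥0∞) ^ m * ∑ q ∈ G, μ (dyI q)) := by
          exact mul_le_mul_right ih _
      _ = (CF : ℝ≥0∞) ^ (m+1) * ∑ q ∈ G, μ (dyI q) := by ring

/-- Finite Carleson: any finite family of members of `F` below `q₀` has total measure
`≤ CF μ(dyI q₀)`. -/
lemma carleson_finset (μ : Measure ℝ) (CF : ℝ≥0) (F : Set (ℤ × ℤ))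
    (hcar : ∀ q₀ ∈ F,
      ∑' q : {q : ℤ × ℤ // q ∈ F ∧ dyadicInterval q.1 q.2 ⊆ dyadicInterval q₀.1 q₀.2},
        μ (dyadicInterval q.1.1 q.1.2) ≤ (CF : ℝ≥0∞) * μ (dyadicInterval q₀.1 q₀.2))
    {q₀ : ℤ × ℤ} (hq₀ : q₀ ∈ F) (s : Finset (ℤ × ℤ))
    (hs : ∀ q ∈ s, q ∈ F ∧ dyI q ⊆ dyI q₀) :
    ∑ q ∈ s, μ (dyI q) ≤ (CF : ℝ≥0∞) * μ (dyI q₀) := by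
  refine le_trans ?_ (hcar q₀ hq₀)
  have h := ENNReal.sum_le_tsum (f := fun q : ℤ × ℤ =>
    Set.indicator {q : ℤ × ℤ | q ∈ F ∧ dyadicInterval q.1 q.2 ⊆ dyadicInterval q₀.1 q₀.2}
      (fun q => μ (dyadicInterval q.1 q.2)) q) s
  rw [← tsum_subtype] at h
  refine le_trans (le_of_eq ?_) h
  apply Finset.sum_congr rfl
  intro q hq
  rw [Set.indicator_of_mem]
  exact hs q hq

/-- Sorting claim: the measure of the intersection of a tuple of dyadic intervals is
dominated by the sum of chain weights over all permutations. -/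
lemma measure_iInter_le_sum_perm (μ : Measure ℝ) (m : ℕ) (g : Fin (m+1) → ℤ × ℤ) :
    μ (⋂ i, dyI (g i)) ≤ ∑ σ : Equiv.Perm (Fin (m+1)), chainWt μ m (g ∘ σ) := by
  by_cases hne : (⋂ i, dyI (g i)).Nonempty
  · obtain ⟨x, hx⟩ := hne
    simp only [Set.mem_iInter] at hx
    set f : Fin (m+1) → ℤ := fun i => (g i).1 with hf
    set σ₀ := Tuple.sort f with hσ₀
    have hmono : Monotone (f ∘ σ₀) := Tuple.monotone_sort f
    set τ : Equiv.Perm (Fin (m+1)) := (Fin.revPerm : Equiv.Perm (Fin (m+1))).trans σ₀ with hτ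
    have hchain : ∀ i j : Fin (m+1), i ≤ j → dyI ((g ∘ τ) j) ⊆ dyI ((g ∘ τ) i) := by
      intro i j hij
      have hrev : j.rev ≤ i.rev := Fin.rev_le_rev.mpr hij
      have hle : f (σ₀ j.rev) ≤ f (σ₀ i.rev) := hmono hrev
      exact dyadic_subset_of_le hle (hx _) (hx _)
    have hval : chainWt μ m (g ∘ τ) = μ (dyI (g (τ (Fin.last m)))) := by
      unfold chainWt
      rw [if_pos hchain]
      rfl
    calc μ (⋂ i, dyI (g i)) ≤ μ (dyI (g (τ (Fin.last m)))) :=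
          measure_mono (Set.iInter_subset _ _)
      _ = chainWt μ m (g ∘ τ) := hval.symm
      _ ≤ ∑ σ : Equiv.Perm (Fin (m+1)), chainWt μ m (g ∘ σ) :=
          Finset.single_le_sum (f := fun σ : Equiv.Perm (Fin (m+1)) => chainWt μ m (g ∘ σ))
            (fun _ _ => zero_le) (Finset.mem_univ τ)
  · rw [Set.not_nonempty_iff_eq_empty] at hne
    rw [hne, measure_empty]
    exact zero_le

open Classical in
/-- The total measure of a finite Carleson subfamily is at most `CF μ(I₀)`. -/
lemma sum_measure_le (μ : Measure ℝ) (CF : ℝ≥0) (I₀ : Set ℝ) (F : Set (ℤ × ℤ))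
    (hsub : ∀ q ∈ F, dyadicInterval q.1 q.2 ⊆ I₀)
    (hcar : ∀ q₀ ∈ F,
      ∑' q : {q : ℤ × ℤ // q ∈ F ∧ dyadicInterval q.1 q.2 ⊆ dyadicInterval q₀.1 q₀.2},
        μ (dyadicInterval q.1.1 q.1.2) ≤ (CF : ℝ≥0∞) * μ (dyadicInterval q₀.1 q₀.2))
    (G : Finset (ℤ × ℤ)) (hGF : ∀ q ∈ G, q ∈ F) :
    ∑ q ∈ G, μ (dyI q) ≤ (CF : ℝ≥0∞) * μ I₀ := by
  -- every q in G has a maximal superset in G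
  have hmax : ∀ q ∈ G, ∃ M, (M ∈ G ∧ dyI q ⊆ dyI M) ∧
      ∀ q' ∈ G, dyI M ⊆ dyI q' → q' = M := by
    intro q hq
    set T := G.filter (fun q' => dyI q ⊆ dyI q') with hT
    have hqT : q ∈ T := by simp [hT, hq]
    obtain ⟨M, hMT, hMmax⟩ := Finset.exists_max_image T (fun q' => q'.1) ⟨q, hqT⟩
    simp only [hT, Finset.mem_filter] at hMT
    refine ⟨M, ⟨hMT.1, hMT.2⟩, ?_⟩
    intro q' hq' hsub'
    have hq'T : q' ∈ T := by
      simp only [hT, Finset.mem_filter]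
      exact ⟨hq', hMT.2.trans hsub'⟩
    have h1 : q'.1 ≤ M.1 := hMmax q' hq'T
    have h2 : M.1 ≤ q'.1 := dyadic_scale_le_of_subset hsub'
    obtain ⟨x, hxM⟩ := dyadic_nonempty M.1 M.2
    have hxq' : x ∈ dyadicInterval q'.1 q'.2 := hsub' hxM
    have hsub'' : dyadicInterval q'.1 q'.2 ⊆ dyadicInterval M.1 M.2 :=
      dyadic_subset_of_le (le_antisymm h1 h2).le hxq' hxM
    have heq : dyadicInterval q'.1 q'.2 = dyadicInterval M.1 M.2 :=
      le_antisymm hsub'' hsub'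
    obtain ⟨e1, e2⟩ := dyadic_inj heq
    exact Prod.ext e1 e2
  -- choice of maximal superset
  choose! fM hfM using hmax
  set P : ℤ × ℤ → Prop := fun M => M ∈ G ∧ ∀ q' ∈ G, dyI M ⊆ dyI q' → q' = M with hP
  have hPf : ∀ q ∈ G, P (fM q) := by
    intro q hq
    exact ⟨(hfM q hq).1.1, (hfM q hq).2⟩
  have hfib : ∑ q ∈ G, μ (dyI q)
      = ∑ M ∈ G, ∑ q ∈ G.filter (fun q => fM q = M), μ (dyI q) :=
    (Finset.sum_fiberwise_of_maps_to (fun q hq => (hfM q hq).1.1) _).symm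
  rw [hfib, ← Finset.sum_filter_add_sum_filter_not G P]
  have hzero : ∑ M ∈ G.filter (fun M => ¬ P M),
      ∑ q ∈ G.filter (fun q => fM q = M), μ (dyI q) = 0 := by
    apply Finset.sum_eq_zero
    intro M hM
    simp only [Finset.mem_filter] at hM
    apply Finset.sum_eq_zero
    intro q hq
    simp only [Finset.mem_filter] at hq
    exfalso
    exact hM.2 (hq.2 ▸ hPf q hq.1)
  rw [hzero, add_zero]
  have hbound : ∀ M ∈ G.filter P,
      ∑ q ∈ G.filter (fun q => fM q = M), μ (dyI q) ≤ (CF : ℝ≥0∞) * μ (dyI M) := by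
    intro M hM
    simp only [Finset.mem_filter] at hM
    apply carleson_finset μ CF F hcar (hGF M hM.1)
    intro q hq
    simp only [Finset.mem_filter] at hq
    exact ⟨hGF q hq.1, hq.2 ▸ (hfM q hq.1).1.2⟩
  calc ∑ M ∈ G.filter P, ∑ q ∈ G.filter (fun q => fM q = M), μ (dyI q)
      ≤ ∑ M ∈ G.filter P, (CF : ℝ≥0∞) * μ (dyI M) := Finset.sum_le_sum hbound
    _ = (CF : ℝ≥0∞) * ∑ M ∈ G.filter P, μ (dyI M) := by rw [Finset.mul_sum]
    _ ≤ (CF : ℝ≥0∞) * μ I₀ := by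
        apply mul_le_mul_right
        have hdisj : (↑(G.filter P) : Set (ℤ × ℤ)).PairwiseDisjoint (fun M => dyI M) := by
          intro M hM M' hM' hne
          simp only [Finset.coe_filter, Set.mem_setOf_eq] at hM hM'
          rw [Function.onFun, Set.disjoint_left]
          intro x hxM hxM'
          rcases dyadic_nested_of_mem hxM hxM' with h | h
          · exact hne ((hM.2.2 M' hM'.1 h).symm)
          · exact hne (hM'.2.2 M hM.1 h)
        rw [← measure_biUnion_finset hdisj (fun M _ => dyadic_measurable M.1 M.2)]
        apply measure_mono
        intro x hx
        simp only [Set.mem_iUnion] at hx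
        obtain ⟨M, hM, hxM⟩ := hx
        simp only [Finset.mem_filter] at hM
        exact hsub M (hGF M hM.1) hxM

lemma prod_indicator_eq (m : ℕ) (g : Fin (m+1) → ℤ × ℤ) (x : ℝ) :
    ∏ i : Fin (m+1), (dyI (g i)).indicator (fun _ => (1:ℝ≥0∞)) x
      = (⋂ i, dyI (g i)).indicator (fun _ => (1:ℝ≥0∞)) x := by
  by_cases hx : x ∈ ⋂ i, dyI (g i)
  · rw [Set.indicator_of_mem hx]
    simp only [Set.mem_iInter] at hx
    apply Finset.prod_eq_one
    intro i _
    rw [Set.indicator_of_mem (hx i)]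
  · rw [Set.indicator_of_notMem hx]
    simp only [Set.mem_iInter, not_forall] at hx
    obtain ⟨i₀, hi₀⟩ := hx
    apply Finset.prod_eq_zero (Finset.mem_univ i₀)
    rw [Set.indicator_of_notMem hi₀]

lemma finite_pow_bound (μ : Measure ℝ) (CF : ℝ≥0) (I₀ : Set ℝ) (F : Set (ℤ × ℤ))
    (hsub : ∀ q ∈ F, dyadicInterval q.1 q.2 ⊆ I₀)
    (hcar : ∀ q₀ ∈ F,
      ∑' q : {q : ℤ × ℤ // q ∈ F ∧ dyadicInterval q.1 q.2 ⊆ dyadicInterval q₀.1 q₀.2},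
        μ (dyadicInterval q.1.1 q.1.2) ≤ (CF : ℝ≥0∞) * μ (dyadicInterval q₀.1 q₀.2))
    (G : Finset (ℤ × ℤ)) (hGF : ∀ q ∈ G, q ∈ F) (m : ℕ) :
    ∫⁻ x in I₀, (∑ q ∈ G, (dyI q).indicator (fun _ => (1:ℝ≥0∞)) x) ^ (m+1) ∂μ
      ≤ ((m+1).factorial : ℝ≥0∞) * (CF : ℝ≥0∞) ^ (m+1) * μ I₀ := by
  have hexp : ∀ x : ℝ, (∑ q ∈ G, (dyI q).indicator (fun _ => (1:ℝ≥0∞)) x) ^ (m+1)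
      = ∑ g ∈ Fintype.piFinset (fun _ : Fin (m+1) => G),
          (⋂ i, dyI (g i)).indicator (fun _ => (1:ℝ≥0∞)) x := by
    intro x
    calc (∑ q ∈ G, (dyI q).indicator (fun _ => (1:ℝ≥0∞)) x) ^ (m+1)
        = ∏ _i : Fin (m+1), ∑ q ∈ G, (dyI q).indicator (fun _ => (1:ℝ≥0∞)) x := by
          rw [Finset.prod_const, Finset.card_univ, Fintype.card_fin]
      _ = ∑ g ∈ Fintype.piFinset (fun _ : Fin (m+1) => G),
            ∏ i, (dyI (g i)).indicator (fun _ => (1:ℝ≥0∞)) x :=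
          Finset.prod_univ_sum _ _
      _ = ∑ g ∈ Fintype.piFinset (fun _ : Fin (m+1) => G),
            (⋂ i, dyI (g i)).indicator (fun _ => (1:ℝ≥0∞)) x :=
          Finset.sum_congr rfl (fun g _ => prod_indicator_eq m g x)
  calc ∫⁻ x in I₀, (∑ q ∈ G, (dyI q).indicator (fun _ => (1:ℝ≥0∞)) x) ^ (m+1) ∂μ
      = ∫⁻ x in I₀, ∑ g ∈ Fintype.piFinset (fun _ : Fin (m+1) => G),
          (⋂ i, dyI (g i)).indicator (fun _ => (1:ℝ≥0∞)) x ∂μ := by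
        apply lintegral_congr
        intro x
        exact hexp x
    _ = ∑ g ∈ Fintype.piFinset (fun _ : Fin (m+1) => G),
          ∫⁻ x in I₀, (⋂ i, dyI (g i)).indicator (fun _ => (1:ℝ≥0∞)) x ∂μ := by
        apply lintegral_finset_sum
        intro g _
        exact Measurable.indicator measurable_const
          (MeasurableSet.iInter (fun i => dyadic_measurable _ _))
    _ ≤ ∑ g ∈ Fintype.piFinset (fun _ : Fin (m+1) => G), μ (⋂ i, dyI (g i)) := by
        apply Finset.sum_le_sum
        intro g _
        rw [lintegral_indicator (MeasurableSet.iInter (fun i => dyadic_measurable _ _))]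
        rw [Measure.restrict_restrict (MeasurableSet.iInter (fun i => dyadic_measurable _ _))]
        simp only [lintegral_const, one_mul, Measure.restrict_apply MeasurableSet.univ,
          Set.univ_inter]
        exact measure_mono Set.inter_subset_left
    _ ≤ ∑ g ∈ Fintype.piFinset (fun _ : Fin (m+1) => G),
          ∑ σ : Equiv.Perm (Fin (m+1)), chainWt μ m (g ∘ σ) := by
        apply Finset.sum_le_sum
        intro g _
        exact measure_iInter_le_sum_perm μ m g
    _ = ∑ σ : Equiv.Perm (Fin (m+1)),
          ∑ g ∈ Fintype.piFinset (fun _ : Fin (m+1) => G), chainWt μ m (g ∘ σ) :=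
        Finset.sum_comm
    _ = ∑ _σ : Equiv.Perm (Fin (m+1)),
          ∑ g ∈ Fintype.piFinset (fun _ : Fin (m+1) => G), chainWt μ m g := by
        apply Finset.sum_congr rfl
        intro σ _
        apply Finset.sum_nbij' (i := fun g => g ∘ σ) (j := fun g => g ∘ σ.symm)
        · intro g hg
          simp only [Fintype.mem_piFinset] at hg ⊢
          intro i; exact hg _
        · intro g hg
          simp only [Fintype.mem_piFinset] at hg ⊢
          intro i; exact hg _
        · intro g _; funext i; simp
        · intro g _; funext i; simp
        · intro g _; rfl
    _ = ((m+1).factorial : ℝ≥0∞) *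
          ∑ g ∈ Fintype.piFinset (fun _ : Fin (m+1) => G), chainWt μ m g := by
        rw [Finset.sum_const, nsmul_eq_mul]
        congr 1
        rw [Finset.card_univ, Fintype.card_perm, Fintype.card_fin]
    _ ≤ ((m+1).factorial : ℝ≥0∞) * ((CF : ℝ≥0∞) ^ m * ∑ q ∈ G, μ (dyI q)) :=
        mul_le_mul_right (chainSum_le μ CF F hcar G hGF m) _
    _ ≤ ((m+1).factorial : ℝ≥0∞) * ((CF : ℝ≥0∞) ^ m * ((CF : ℝ≥0∞) * μ I₀)) :=
        mul_le_mul_right (mul_le_mul_right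
          (sum_measure_le μ CF I₀ F hsub hcar G hGF) _) _
    _ = ((m+1).factorial : ℝ≥0∞) * (CF : ℝ≥0∞) ^ (m+1) * μ I₀ := by ring

lemma ennreal_rpow_le_one_add_pow (x : ℝ≥0∞) {c : ℝ} (hc : 0 ≤ c) {m : ℕ} (hm : c ≤ m) :
    x ^ c ≤ 1 + x ^ m := by
  rcases le_total x 1 with h | h
  · exact le_trans (ENNReal.rpow_le_one h hc) le_self_add
  · have h1 : x ^ c ≤ x ^ (m:ℝ) := ENNReal.rpow_le_rpow_of_exponent_le h hm
    rw [ENNReal.rpow_natCast] at h1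
    exact h1.trans le_add_self

lemma ennreal_iSup_rpow (a : ℕ → ℝ≥0∞) {c : ℝ} (hc : 0 < c) :
    (⨆ n, a n) ^ c = ⨆ n, a n ^ c := by
  apply le_antisymm
  · have h1 : ∀ n, a n ≤ (⨆ n, a n ^ c) ^ c⁻¹ := by
      intro n
      have h2 : a n ^ c ≤ ⨆ n, a n ^ c := le_iSup (fun n => a n ^ c) n
      have h3 := ENNReal.rpow_le_rpow h2 (inv_nonneg.mpr hc.le)
      rwa [← ENNReal.rpow_mul, mul_inv_cancel₀ hc.ne', ENNReal.rpow_one] at h3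
    have h4 := ENNReal.rpow_le_rpow (iSup_le h1) hc.le
    rwa [← ENNReal.rpow_mul, inv_mul_cancel₀ hc.ne', ENNReal.rpow_one] at h4
  · exact iSup_le fun n => ENNReal.rpow_le_rpow (le_iSup a n) hc.le


/-- Carleson embedding for overlap functions: if `F` is a Carleson family of dyadic
intervals contained in `I₀` with Carleson constant `C_F`, then for `1 < p < ∞`,
`∫_{I₀} (∑_{F ∈ F} 1_F)^{p/2} dμ ≤ C μ(I₀)` with `C` depending only on `p, C_F`. -/
theorem stmt16 (p : ℝ) (hp : 1 < p) (CF : ℝ≥0) :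
    ∃ C : ℝ≥0∞, C ≠ ⊤ ∧
      ∀ (μ : Measure ℝ), IsLocallyFiniteMeasure μ →
        ∀ (I₀ : Set ℝ) (F : Set (ℤ × ℤ)),
          (∀ q ∈ F, dyadicInterval q.1 q.2 ⊆ I₀) →
          (∀ q₀ ∈ F,
            ∑' q : {q : ℤ × ℤ // q ∈ F ∧
                dyadicInterval q.1 q.2 ⊆ dyadicInterval q₀.1 q₀.2},
              μ (dyadicInterval q.1.1 q.1.2)
              ≤ (CF : ℝ≥0∞) * μ (dyadicInterval q₀.1 q₀.2)) →
          ∫⁻ x in I₀,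
              (∑' q : F,
                (dyadicInterval q.1.1 q.1.2).indicator (fun _ => (1 : ℝ≥0∞)) x) ^ (p / 2) ∂μ
            ≤ C * μ I₀ := by
  classical
  set m : ℕ := ⌈p / 2⌉₊ with hm
  have hp2 : 0 < p / 2 := by linarith
  have hm1 : 1 ≤ m := Nat.one_le_iff_ne_zero.mpr (by
    simp only [hm, ne_eq, Nat.ceil_eq_zero, not_le]
    exact hp2)
  obtain ⟨m', hm'⟩ : ∃ m', m = m' + 1 := ⟨m - 1, by omega⟩
  refine ⟨1 + (m.factorial : ℝ≥0∞) * (CF : ℝ≥0∞) ^ m, ?_, ?_⟩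
  · exact ENNReal.add_ne_top.mpr ⟨ENNReal.one_ne_top,
      ENNReal.mul_ne_top (ENNReal.natCast_ne_top _) (ENNReal.pow_ne_top ENNReal.coe_ne_top)⟩
  intro μ _ I₀ F hsub hcar
  obtain ⟨e, he⟩ := exists_surjective_nat (ℤ × ℤ)
  set G : ℕ → Finset (ℤ × ℤ) := fun n => ((Finset.range n).image e).filter (· ∈ F) with hG
  have hGF : ∀ n, ∀ q ∈ G n, q ∈ F := by
    intro n q hq
    simp only [hG, Finset.mem_filter] at hq
    exact hq.2
  have hGmono : ∀ {n n' : ℕ}, n ≤ n' → G n ⊆ G n' := by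
    intro n n' hnn
    exact Finset.filter_subset_filter _
      (Finset.image_subset_image (Finset.range_subset_range.mpr hnn))
  -- pointwise identification of the tsum as a sup of finite sums
  have hpt : ∀ x : ℝ,
      (∑' q : F, (dyadicInterval q.1.1 q.1.2).indicator (fun _ => (1 : ℝ≥0∞)) x)
        = ⨆ n, ∑ q ∈ G n, (dyI q).indicator (fun _ => (1:ℝ≥0∞)) x := by
    intro x
    set f : ℤ × ℤ → ℝ≥0∞ := fun q => (dyI q).indicator (fun _ => (1:ℝ≥0∞)) x with hf
    have h1 : (∑' q : F, (dyadicInterval q.1.1 q.1.2).indicator (fun _ => (1 : ℝ≥0∞)) x)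
        = ∑' q : ℤ × ℤ, F.indicator f q := tsum_subtype F f
    rw [h1]
    rw [ENNReal.tsum_eq_iSup_sum' (fun n => (Finset.range n).image e) ?_]
    · apply iSup_congr
      intro n
      rw [hG, Finset.sum_filter]
      apply Finset.sum_congr rfl
      intro q _
      exact Set.indicator_apply F f q
    · intro t
      have : ∀ q ∈ t, ∃ k, e k = q := fun q _ => he q
      choose idx hidx using this
      classical
      refine ⟨(t.image (fun q => if h : q ∈ t then idx q h else 0)).sup id + 1, ?_⟩
      intro q hq
      simp only [Finset.mem_image]
      refine ⟨idx q hq, Finset.mem_range.mpr ?_, hidx q hq⟩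
      have : idx q hq ≤ (t.image (fun q => if h : q ∈ t then idx q h else 0)).sup id := by
        apply Finset.le_sup (f := id)
        simp only [Finset.mem_image]
        exact ⟨q, hq, by rw [dif_pos hq]⟩
      omega
  -- the partial sums, raised to the power p/2
  set S : ℕ → ℝ → ℝ≥0∞ := fun n x => ∑ q ∈ G n, (dyI q).indicator (fun _ => (1:ℝ≥0∞)) x
    with hS
  have hSmeas : ∀ n, Measurable (S n) := by
    intro n
    apply Finset.measurable_sum
    intro q _
    exact Measurable.indicator measurable_const (dyadic_measurable _ _)
  have hSmono : ∀ x, Monotone (fun n => S n x) := by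
    intro x n n' hnn
    exact Finset.sum_le_sum_of_subset (hGmono hnn)
  calc ∫⁻ x in I₀,
        (∑' q : F, (dyadicInterval q.1.1 q.1.2).indicator (fun _ => (1 : ℝ≥0∞)) x) ^ (p / 2) ∂μ
      = ∫⁻ x in I₀, ⨆ n, (S n x) ^ (p / 2) ∂μ := by
        apply lintegral_congr
        intro x
        rw [hpt x, ennreal_iSup_rpow _ hp2]
    _ = ⨆ n, ∫⁻ x in I₀, (S n x) ^ (p / 2) ∂μ := by
        apply lintegral_iSup
        · intro n
          exact (ENNReal.continuous_rpow_const.measurable).comp (hSmeas n)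
        · intro n n' hnn x
          exact ENNReal.rpow_le_rpow (hSmono x hnn) hp2.le
    _ ≤ (1 + (m.factorial : ℝ≥0∞) * (CF : ℝ≥0∞) ^ m) * μ I₀ := by
        apply iSup_le
        intro n
        have hptw : ∀ x, (S n x) ^ (p / 2) ≤ 1 + (S n x) ^ m := by
          intro x
          exact ennreal_rpow_le_one_add_pow _ hp2.le (Nat.le_ceil _)
        calc ∫⁻ x in I₀, (S n x) ^ (p / 2) ∂μ
            ≤ ∫⁻ x in I₀, (1 + (S n x) ^ m) ∂μ := lintegral_mono hptw
          _ = ∫⁻ _x in I₀, (1:ℝ≥0∞) ∂μ + ∫⁻ x in I₀, (S n x) ^ m ∂μ := by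
              apply lintegral_add_left measurable_const
          _ ≤ μ I₀ + (m.factorial : ℝ≥0∞) * (CF : ℝ≥0∞) ^ m * μ I₀ := by
              apply add_le_add
              · rw [setLIntegral_one]
              · rw [hm']
                exact finite_pow_bound μ CF I₀ F hsub hcar (G n) (hGF n) m'
          _ = (1 + (m.factorial : ℝ≥0∞) * (CF : ℝ≥0∞) ^ m) * μ I₀ := by
              rw [add_mul, one_mul]
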